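/- Let d ≥ 1, let C be a finite set of classes, let λ > 0, let σ ∈ ℝ^d with σ_i > 0 for all i, and let μ ∈ ℝ^d. Let ν' be the law of a random vector ε' ∈ ℝ^d whose coordinates are independent with ε'_i uniformly distributed on the interval [μ_i − λσ_i, μ_i + λσ_i]. Let f : ℝ^d → C be a measurable classifier, let x ∈ ℝ^d, let c_A ∈ C, and let p_A ∈ (1/2, 1] be such that ℙ_{ε'∼ν'}(f(x+ε') = c_A) ≥ p_A and ℙ_{ε'∼ν'}(f(x+ε') = c) ≤ 1 − p_A for every class c ≠ c_A. Then for every δ ∈ ℝ^d with ‖δ ⊘ σ‖_1 < 2λ(p_A − 1/2) and every class c ≠ c_A, ℙ_{ε'∼ν'}(f(x+δ+ε') = c_A) > ℙ_{ε'∼ν'}(f(x+δ+ε') = c). -/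

import Mathlib

open MeasureTheory

lemma weierstrass_one_sub {ι : Type*} (s : Finset ι) (g : ι → ℝ)
    (h0 : ∀ i ∈ s, 0 ≤ g i) (h1 : ∀ i ∈ s, g i ≤ 1) :
    1 - ∑ i ∈ s, g i ≤ ∏ i ∈ s, (1 - g i) := by
  classical
  induction s using Finset.cons_induction with
  | empty => simp
  | cons a s ha ih =>
    rw [Finset.sum_cons, Finset.prod_cons]
    have h0a := h0 a (Finset.mem_cons_self a s)
    have h1a := h1 a (Finset.mem_cons_self a s)
    have hsum0 : 0 ≤ ∑ i ∈ s, g i :=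
      Finset.sum_nonneg fun i hi => h0 i (Finset.mem_cons_of_mem hi)
    have ih' := ih (fun i hi => h0 i (Finset.mem_cons_of_mem hi))
      (fun i hi => h1 i (Finset.mem_cons_of_mem hi))
    nlinarith

lemma pi_restrict_eq {ι : Type*} [Fintype ι] {α : ι → Type*} [∀ i, MeasurableSpace (α i)]
    (m : ∀ i, Measure (α i)) [∀ i, IsFiniteMeasure (m i)]
    (J : ∀ i, Set (α i)) (hJ : ∀ i, MeasurableSet (J i)) :
    Measure.pi (fun i => (m i).restrict (J i)) =
      (Measure.pi m).restrict (Set.pi Set.univ J) := by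
  haveI : ∀ i, SigmaFinite ((m i).restrict (J i)) := fun i => inferInstance
  refine Measure.pi_eq (μ := fun i => (m i).restrict (J i))
    (μ' := (Measure.pi m).restrict (Set.pi Set.univ J)) fun s hs => ?_
  rw [Measure.restrict_apply (MeasurableSet.univ_pi hs), ← Set.pi_inter_distrib,
    Measure.pi_pi]
  exact Finset.prod_congr rfl fun i _ => (Measure.restrict_apply (hs i)).symm

/-- The uniform probability measure on `[A, B]`. -/
noncomputable def unif (A B : ℝ) : Measure ℝ :=
  (volume (Set.Icc A B))⁻¹ • volume.restrict (Set.Icc A B)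

lemma unif_prob {A B : ℝ} (h : A < B) : IsProbabilityMeasure (unif A B) := by
  constructor
  rw [unif]
  simp only [Measure.smul_apply, Measure.restrict_apply MeasurableSet.univ,
    Set.univ_inter, smul_eq_mul, Real.volume_Icc]
  exact ENNReal.inv_mul_cancel (by simp [h, sub_pos.mpr h]) (by simp)

lemma unif_shift {c A B : ℝ} :
    Measure.map (fun y : ℝ => c + y) (unif A B) = unif (A + c) (B + c) := by
  rw [unif, unif]
  have hemb : MeasurableEmbedding (fun y : ℝ => c + y) :=
    (Homeomorph.addLeft c).measurableEmbedding
  have hmap : Measure.map (fun y : ℝ => c + y) volume = volume :=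
    map_add_left_eq_self volume c
  have hres := hemb.restrict_map volume (Set.Icc (A + c) (B + c))
  rw [hmap] at hres
  have hpre : (fun y : ℝ => c + y) ⁻¹' Set.Icc (A + c) (B + c) = Set.Icc A B := by
    rw [Set.preimage_const_add_Icc]
    congr 1 <;> ring
  rw [hpre] at hres
  rw [Measure.map_smul, ← hres]
  congr 1
  rw [Real.volume_Icc, Real.volume_Icc]
  ring_nf

/-- Shifting a product of uniform measures. -/
lemma pi_unif_shift {d : ℕ} (a b δ : Fin d → ℝ) (hab : ∀ i, a i < b i) :
    MeasurePreserving (fun ε : Fin d → ℝ => δ + ε)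
      (Measure.pi fun i => unif (a i) (b i))
      (Measure.pi fun i => unif (a i + δ i) (b i + δ i)) := by
  haveI : ∀ i, IsProbabilityMeasure (unif (a i + δ i) (b i + δ i)) :=
    fun i => unif_prob (by linarith [hab i])
  haveI : ∀ i, SigmaFinite (unif (a i + δ i) (b i + δ i)) := fun i => by
    haveI := unif_prob (show a i + δ i < b i + δ i by linarith [hab i])
    infer_instance
  exact measurePreserving_pi _ _ (f := fun i y => δ i + y)
    (fun i => ⟨measurable_const_add (δ i), unif_shift⟩)

/-- Key shift stability bound for products of uniform measures. -/
lemma pi_unif_shift_bound {d : ℕ} (a b δ : Fin d → ℝ) (hab : ∀ i, a i < b i)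
    (hδ : ∀ i, |δ i| ≤ b i - a i) (s : Set (Fin d → ℝ)) (hs : MeasurableSet s) :
    ((Measure.pi fun i => unif (a i) (b i)) s).toReal - ∑ i, |δ i| / (b i - a i) ≤
      ((Measure.pi fun i => unif (a i + δ i) (b i + δ i)) s).toReal := by
  haveI hP1 : ∀ i, IsProbabilityMeasure (unif (a i) (b i)) := fun i => unif_prob (hab i)
  haveI hP2 : ∀ i, IsProbabilityMeasure (unif (a i + δ i) (b i + δ i)) :=
    fun i => unif_prob (by linarith [hab i])
  haveI hF1 : ∀ i, IsFiniteMeasure (unif (a i) (b i)) := fun i => by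
    haveI := hP1 i; infer_instance
  haveI hF2 : ∀ i, IsFiniteMeasure (unif (a i + δ i) (b i + δ i)) := fun i => by
    haveI := hP2 i; infer_instance
  haveI : IsProbabilityMeasure (Measure.pi fun i => unif (a i) (b i)) :=
    Measure.pi.instIsProbabilityMeasure _
  haveI : IsProbabilityMeasure (Measure.pi fun i => unif (a i + δ i) (b i + δ i)) :=
    Measure.pi.instIsProbabilityMeasure _
  set ν1 := Measure.pi fun i => unif (a i) (b i) with hν1
  set ν2 := Measure.pi fun i => unif (a i + δ i) (b i + δ i) with hν2
  -- the common part
  set J : Fin d → Set ℝ := fun i =>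
    Set.Icc (max (a i) (a i + δ i)) (min (b i) (b i + δ i)) with hJdef
  have hJmeas : ∀ i, MeasurableSet (J i) := fun i => measurableSet_Icc
  have hJinter : ∀ i, Set.Icc (a i) (b i) ∩ Set.Icc (a i + δ i) (b i + δ i) = J i :=
    fun i => Set.Icc_inter_Icc
  have hJsub1 : ∀ i, J i ⊆ Set.Icc (a i) (b i) := by
    intro i; rw [← hJinter i]; exact Set.inter_subset_left
  have hJsub2 : ∀ i, J i ⊆ Set.Icc (a i + δ i) (b i + δ i) := by
    intro i; rw [← hJinter i]; exact Set.inter_subset_right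
  have hvol2 : ∀ i, volume (Set.Icc (a i + δ i) (b i + δ i)) =
      volume (Set.Icc (a i) (b i)) := by
    intro i; rw [Real.volume_Icc, Real.volume_Icc]; congr 1; ring
  have hrest : ∀ i, (unif (a i) (b i)).restrict (J i)
      = (unif (a i + δ i) (b i + δ i)).restrict (J i) := by
    intro i
    rw [unif, unif, Measure.restrict_smul, Measure.restrict_smul,
      Measure.restrict_restrict (hJmeas i), Measure.restrict_restrict (hJmeas i),
      Set.inter_eq_left.mpr (hJsub1 i), Set.inter_eq_left.mpr (hJsub2 i), hvol2 i]
  set ρ : Measure (Fin d → ℝ) :=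
    Measure.pi (fun i => (unif (a i) (b i)).restrict (J i)) with hρdef
  have hρ1 : ρ = ν1.restrict (Set.pi Set.univ J) := by
    rw [hρdef, hν1, pi_restrict_eq _ J hJmeas]
  have hρ2 : ρ = ν2.restrict (Set.pi Set.univ J) := by
    have heq : (fun i => (unif (a i) (b i)).restrict (J i))
        = fun i => (unif (a i + δ i) (b i + δ i)).restrict (J i) := by
      funext i; exact hrest i
    rw [hρdef, heq, hν2, pi_restrict_eq _ J hJmeas]
  have hρle1 : ∀ u, ρ u ≤ ν1 u := by
    intro u; rw [hρ1]; exact Measure.restrict_le_self u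
  have hρle2 : ∀ u, ρ u ≤ ν2 u := by
    intro u; rw [hρ2]; exact Measure.restrict_le_self u
  have hρtop : ∀ u, ρ u ≠ ⊤ := fun u =>
    ne_top_of_le_ne_top (measure_ne_top ν1 u) (hρle1 u)
  -- mass of ρ
  set g : Fin d → ℝ := fun i => |δ i| / (b i - a i) with hgdef
  have hba : ∀ i, (0:ℝ) < b i - a i := fun i => sub_pos.mpr (hab i)
  have hg0 : ∀ i, 0 ≤ g i := fun i => div_nonneg (abs_nonneg _) (hba i).le
  have hg1 : ∀ i, g i ≤ 1 := by
    intro i; rw [hgdef]; exact (div_le_one (hba i)).mpr (hδ i)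
  have hJvol : ∀ i, volume (J i) = ENNReal.ofReal ((b i - a i) - |δ i|) := by
    intro i
    rw [hJdef]
    simp only []
    rw [Real.volume_Icc]
    congr 1
    rcases le_or_gt 0 (δ i) with h | h
    · rw [abs_of_nonneg h, max_eq_right (by linarith), min_eq_left (by linarith)]
      ring
    · rw [abs_of_neg h, max_eq_left (by linarith), min_eq_right (by linarith)]
      ring
  have hρfactor : ∀ i, ((unif (a i) (b i)).restrict (J i)) Set.univ
      = ENNReal.ofReal (1 - g i) := by
    intro i
    rw [Measure.restrict_apply MeasurableSet.univ, Set.univ_inter, unif]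
    simp only [Measure.smul_apply, smul_eq_mul]
    rw [Measure.restrict_apply (hJmeas i), Set.inter_eq_left.mpr (hJsub1 i),
      Real.volume_Icc, hJvol i, ← ENNReal.div_eq_inv_mul,
      ← ENNReal.ofReal_div_of_pos (hba i)]
    congr 1
    rw [hgdef]
    simp only []
    rw [sub_div, div_self (hba i).ne']
  haveI : ∀ i, SigmaFinite ((unif (a i) (b i)).restrict (J i)) := fun i => by
    haveI := hF1 i; infer_instance
  have hρuniv : ρ Set.univ = ENNReal.ofReal (∏ i, (1 - g i)) := by
    rw [hρdef, Measure.pi_univ,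
      ENNReal.ofReal_prod_of_nonneg (fun i _ => by linarith [hg1 i])]
    exact Finset.prod_congr rfl fun i _ => hρfactor i
  have hρuniv' : 1 - ∑ i, g i ≤ (ρ Set.univ).toReal := by
    rw [hρuniv, ENNReal.toReal_ofReal
      (Finset.prod_nonneg (fun i _ => by linarith [hg1 i]))]
    exact weierstrass_one_sub _ _ (fun i _ => hg0 i) (fun i _ => hg1 i)
  -- conclusion
  have h1 : (ρ s).toReal ≤ (ν2 s).toReal :=
    ENNReal.toReal_mono (measure_ne_top ν2 s) (hρle2 s)
  have h2 : (ρ s).toReal + (ρ sᶜ).toReal = (ρ Set.univ).toReal := by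
    rw [← ENNReal.toReal_add (hρtop s) (hρtop sᶜ), measure_add_measure_compl hs]
  have h3 : (ρ sᶜ).toReal ≤ (ν1 sᶜ).toReal :=
    ENNReal.toReal_mono (measure_ne_top ν1 sᶜ) (hρle1 sᶜ)
  have h4 : (ν1 s).toReal + (ν1 sᶜ).toReal = 1 := by
    rw [← ENNReal.toReal_add (measure_ne_top _ _) (measure_ne_top _ _),
      measure_add_measure_compl hs, measure_univ, ENNReal.toReal_one]
  have hgsum : ∑ i, g i = ∑ i, |δ i| / (b i - a i) := rfl
  linarith

/-- Certified robustness against `ℓ_1` perturbations with independent anisotropic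
uniform noise, `ε'_i` uniform on `[μ_i − λσ_i, μ_i + λσ_i]`: robustness is
guaranteed for `‖δ ⊘ σ‖_1 < 2λ(p_A − 1/2)`. -/
theorem uniform_anisotropic_certified_robustness_l1
    {d : ℕ} (hd : 1 ≤ d)
    {C : Type} [Fintype C] [MeasurableSpace C] [MeasurableSingletonClass C]
    (lam : ℝ) (hlam : 0 < lam)
    (σ : Fin d → ℝ) (hσ : ∀ i, 0 < σ i) (μ : Fin d → ℝ)
    (ν' : Measure (Fin d → ℝ))
    (hν' : ν' = Measure.pi fun i : Fin d =>
      (volume (Set.Icc (μ i - lam * σ i) (μ i + lam * σ i)))⁻¹ •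
        volume.restrict (Set.Icc (μ i - lam * σ i) (μ i + lam * σ i)))
    (f : (Fin d → ℝ) → C) (hf : Measurable f)
    (x : Fin d → ℝ) (cA : C) (pA : ℝ) (hpA : 1 / 2 < pA) (hpA' : pA ≤ 1)
    (hA : pA ≤ (ν' {ε' | f (x + ε') = cA}).toReal)
    (hB : ∀ c : C, c ≠ cA → (ν' {ε' | f (x + ε') = c}).toReal ≤ 1 - pA) :
    ∀ δ : Fin d → ℝ, (∑ i, |δ i / σ i|) < 2 * lam * (pA - 1 / 2) →
      ∀ c : C, c ≠ cA →
        (ν' {ε' | f (x + δ + ε') = c}).toReal <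
          (ν' {ε' | f (x + δ + ε') = cA}).toReal := by
  intro δ hδ c hc
  have hν1 : ν' = Measure.pi fun i =>
      unif (μ i - lam * σ i) (μ i + lam * σ i) := hν'
  have hab : ∀ i, μ i - lam * σ i < μ i + lam * σ i := by
    intro i; have := hσ i; nlinarith
  have hba : ∀ i, (μ i + lam * σ i) - (μ i - lam * σ i) = 2 * lam * σ i := by
    intro i; ring
  have hδi : ∀ i, |δ i| ≤ lam * σ i := by
    intro i
    have h1 : |δ i / σ i| ≤ ∑ j, |δ j / σ j| :=
      Finset.single_le_sum (f := fun j => |δ j / σ j|) (fun j _ => abs_nonneg _)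
        (Finset.mem_univ i)
    have h2 : 2 * lam * (pA - 1 / 2) ≤ lam := by nlinarith
    have h3 : |δ i / σ i| ≤ lam := le_trans h1 (le_trans hδ.le h2)
    rw [abs_div, abs_of_pos (hσ i), div_le_iff₀ (hσ i)] at h3
    linarith
  have hδi' : ∀ i, |δ i| ≤ (μ i + lam * σ i) - (μ i - lam * σ i) := by
    intro i
    rw [hba i]
    have := hδi i
    have h0 : 0 < lam * σ i := by have := hσ i; positivity
    nlinarith
  -- measure preserving shift
  set Q : Measure (Fin d → ℝ) := Measure.pi fun i =>
    unif (μ i - lam * σ i + δ i) (μ i + lam * σ i + δ i) with hQdef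
  have hmp : MeasurePreserving (fun ε : Fin d → ℝ => δ + ε) ν' Q := by
    rw [hν1, hQdef]
    exact pi_unif_shift _ _ δ hab
  have hSmeas : ∀ c' : C, MeasurableSet {ε : Fin d → ℝ | f (x + ε) = c'} := by
    intro c'
    exact (hf.comp (measurable_const_add x)) (measurableSet_singleton c')
  have hQS : ∀ c' : C, ν' {ε | f (x + δ + ε) = c'} = Q {ε | f (x + ε) = c'} := by
    intro c'
    have hpre : (fun ε : Fin d → ℝ => δ + ε) ⁻¹' {ε | f (x + ε) = c'}
        = {ε | f (x + δ + ε) = c'} := by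
      ext ε
      simp only [Set.mem_preimage, Set.mem_setOf_eq, add_assoc]
    rw [← hpre, hmp.measure_preimage (hSmeas c').nullMeasurableSet]
  -- the total variation style bound
  set t : ℝ := ∑ i, |δ i| / ((μ i + lam * σ i) - (μ i - lam * σ i)) with htdef
  have htval : t < pA - 1 / 2 := by
    rw [htdef]
    have heq : ∀ i ∈ Finset.univ, |δ i| / ((μ i + lam * σ i) - (μ i - lam * σ i))
        = |δ i / σ i| / (2 * lam) := by
      intro i _
      rw [hba i, abs_div, abs_of_pos (hσ i), div_div]
      congr 1
      ring
    rw [Finset.sum_congr rfl heq, ← Finset.sum_div]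
    rw [div_lt_iff₀ (by positivity : (0:ℝ) < 2 * lam)]
    calc (∑ i, |δ i / σ i|) < 2 * lam * (pA - 1/2) := hδ
    _ = (pA - 1/2) * (2 * lam) := by ring
  -- lower bound on Q of the top class
  have hlow := pi_unif_shift_bound (fun i => μ i - lam * σ i)
    (fun i => μ i + lam * σ i) δ hab hδi' {ε | f (x + ε) = cA} (hSmeas cA)
  rw [← hν1, ← hQdef] at hlow
  -- upper bound on Q of other classes
  have hup := pi_unif_shift_bound (fun i => μ i - lam * σ i + δ i)
    (fun i => μ i + lam * σ i + δ i) (fun i => -δ i)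
    (fun i => by linarith [hab i])
    (fun i => by
      show |(-δ i)| ≤ (μ i + lam * σ i + δ i) - (μ i - lam * σ i + δ i)
      rw [abs_neg]; have := hδi' i; linarith)
    {ε | f (x + ε) = c} (hSmeas c)
  simp only [add_neg_cancel_right] at hup
  rw [← hν1, ← hQdef] at hup
  have htup : (∑ i, |(-δ i)| / ((μ i + lam * σ i + δ i) - (μ i - lam * σ i + δ i))) = t := by
    rw [htdef]
    refine Finset.sum_congr rfl fun i _ => ?_
    rw [abs_neg]
    congr 1
    ring
  rw [htup] at hup
  -- conclude
  have hA' : pA ≤ (ν' {ε | f (x + ε) = cA}).toReal := hA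
  have hB' : (ν' {ε | f (x + ε) = c}).toReal ≤ 1 - pA := hB c hc
  rw [hQS c, hQS cA]
  linarith
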